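/- For τ in the upper half-plane and z ∈ ℂ, ϑ₁₁(2τ, z + τ/2) · ϑ₁₁(2τ, z − τ/2) = q^{−1/8} (η(2τ)²/η(τ)) · ϑ₀₁(τ, z), where q = e^{2πiτ}. -/

import Mathlib

open Real Complex Filter Topology

noncomputable section

noncomputable def theta00 (τ z : ℂ) : ℂ :=
  ∑' n : ℤ, Complex.exp (2*(π:ℂ)*Complex.I*(n:ℂ)*z) *
    Complex.exp (2*(π:ℂ)*Complex.I*τ*((n:ℂ)^2/2))

noncomputable def theta01 (τ z : ℂ) : ℂ :=
  ∑' n : ℤ, (-1:ℂ)^n * Complex.exp (2*(π:ℂ)*Complex.I*(n:ℂ)*z) *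
    Complex.exp (2*(π:ℂ)*Complex.I*τ*((n:ℂ)^2/2))

noncomputable def theta10 (τ z : ℂ) : ℂ :=
  ∑' n : ℤ, Complex.exp (2*(π:ℂ)*Complex.I*((n:ℂ)+1/2)*z) *
    Complex.exp (2*(π:ℂ)*Complex.I*τ*((1/2)*((n:ℂ)+1/2)^2))

noncomputable def theta11 (τ z : ℂ) : ℂ :=
  Complex.I * ∑' n : ℤ, (-1:ℂ)^n * Complex.exp (2*(π:ℂ)*Complex.I*((n:ℂ)+1/2)*z) *
    Complex.exp (2*(π:ℂ)*Complex.I*τ*((1/2)*((n:ℂ)+1/2)^2))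

noncomputable def dedekindEta (τ : ℂ) : ℂ :=
  Complex.exp ((π:ℂ)*Complex.I*τ/12) *
    ∏' n : ℕ, (1 - Complex.exp (2*(π:ℂ)*Complex.I*τ*((n:ℂ)+1)))

namespace JTPmain
open Finset

def Df (x : ℂ) (N : ℕ) : ℂ := ∏ i ∈ Finset.range N, (1 - x^(i+1))

lemma term_ne {x : ℂ} (hx : ‖x‖ < 1) (n : ℕ) : (1 : ℂ) - x^(n+1) ≠ 0 := by
  intro h
  have h1 : x^(n+1) = 1 := by linear_combination -h
  have h2 : ‖x^(n+1)‖ < 1 := by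
    rw [norm_pow]; exact pow_lt_one₀ (norm_nonneg x) hx (Nat.succ_ne_zero n)
  rw [h1] at h2; simp at h2

lemma Df_ne {x : ℂ} (hx : ‖x‖ < 1) (N : ℕ) : Df x N ≠ 0 :=
  Finset.prod_ne_zero_iff.2 (fun i _ => term_ne hx i)

lemma Df_zero (x : ℂ) : Df x 0 = 1 := by simp [Df]

lemma Df_succ (x : ℂ) (N : ℕ) : Df x (N+1) = Df x N * (1 - x^(N+1)) :=
  Finset.prod_range_succ _ _

/-- Gaussian binomial as a ratio of finite q-Pochhammer products. -/
def g (p : ℂ) (M k : ℕ) : ℂ := if k ≤ M then Df p M / (Df p k * Df p (M-k)) else 0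

def ch : ℕ → ℕ
  | 0 => 0
  | (k+1) => ch k + k

lemma ch_int (k : ℕ) : 2*(ch k : ℤ) = k*(k-1) := by
  induction k with
  | zero => simp [ch]
  | succ n ih => push_cast [ch] at ih ⊢; ring_nf; ring_nf at ih; omega

lemma g_zero {p : ℂ} (hp : ‖p‖ < 1) (M : ℕ) : g p M 0 = 1 := by
  rw [g, if_pos (Nat.zero_le M), Df_zero, Nat.sub_zero, one_mul, div_self (Df_ne hp M)]

lemma g_diag {p : ℂ} (hp : ‖p‖ < 1) (M : ℕ) : g p M M = 1 := by
  rw [g, if_pos le_rfl, Nat.sub_self, Df_zero, mul_one, div_self (Df_ne hp M)]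

lemma g_top {p : ℂ} (M k : ℕ) (h : M < k) : g p M k = 0 := if_neg (by omega)

lemma g_pascal {p : ℂ} (hp : ‖p‖ < 1) (M k : ℕ) (hk : 1 ≤ k) :
    g p (M+1) k = g p M k + p^(M+1-k) * g p M (k-1) := by
  rcases lt_trichotomy k (M+1) with hlt | heq | hgt
  · -- 1 ≤ k ≤ M
    have hkM' : k ≤ M := by omega
    obtain ⟨d2, hd2⟩ : ∃ d2, M + 1 - k = d2 + 1 := ⟨M - k, by omega⟩
    obtain ⟨k1, hk1⟩ : ∃ k1, k = k1 + 1 := ⟨k - 1, by omega⟩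
    have e1 : g p (M+1) k
        = Df p M * (1 - p^(M+1)) / (Df p k * (Df p (M-k) * (1 - p^(d2+1)))) := by
      rw [g, if_pos (by omega)]
      rw [show M + 1 - k = (M - k) + 1 by omega, Df_succ, Df_succ]
      rw [show M - k + 1 = d2 + 1 by omega]
    have e2 : g p M k = Df p M / (Df p k * Df p (M-k)) := by rw [g, if_pos hkM']
    have e3 : g p M (k-1) = Df p M / (Df p k1 * (Df p (M-k) * (1 - p^(d2+1)))) := by
      rw [g, if_pos (by omega)]
      rw [show k - 1 = k1 by omega]
      rw [show M - k1 = (M - k) + 1 by omega, Df_succ]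
      rw [show M - k + 1 = d2 + 1 by omega]
    have e4 : Df p k = Df p k1 * (1 - p^k) := by rw [hk1, Df_succ, ← hk1]
    have hd2e : p^(M+1-k) = p^(d2+1) := by rw [hd2]
    have hw : p^(M+1) = p^(d2+1) * p^k := by
      rw [← pow_add]; congr 1; omega
    rw [e1, e2, e3, e4, hd2e, hw]
    have n1 : Df p k1 ≠ 0 := Df_ne hp k1
    have n2 : Df p (M-k) ≠ 0 := Df_ne hp (M-k)
    have n3 : (1:ℂ) - p^k ≠ 0 := by rw [hk1]; exact term_ne hp k1
    have n4 : (1:ℂ) - p^(d2+1) ≠ 0 := term_ne hp d2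
    generalize Df p M = A at *
    generalize Df p k1 = B at *
    generalize Df p (M-k) = C at *
    generalize p^(d2+1) = u at *
    generalize p^k = v at *
    field_simp
    ring
  · -- k = M+1
    subst heq
    rw [g_top (p := p) M (M+1) (by omega), g_diag hp, Nat.sub_self, pow_zero,
      show M + 1 - 1 = M by omega, g_diag hp]
    simp
  · -- k > M+1
    rw [g_top (p := p) (M+1) k hgt, g_top (p := p) M k (by omega),
      g_top (p := p) M (k-1) (by omega)]
    simp

theorem rothe {p : ℂ} (hp : ‖p‖ < 1) (z : ℂ) (M : ℕ) :
    ∏ j ∈ range M, (1 + z * p^j) = ∑ k ∈ range (M+1), g p M k * p^(ch k) * z^k := by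
  induction M with
  | zero => simp [g_zero hp, ch]
  | succ M ih =>
    rw [Finset.prod_range_succ, ih]
    have expand : (∑ k ∈ range (M+1), g p M k * p^(ch k) * z^k) * (1 + z * p^M)
        = (∑ k ∈ range (M+1), g p M k * p^(ch k) * z^k)
          + (∑ k ∈ range (M+1), g p M k * p^(ch k + M) * z^(k+1)) := by
      rw [mul_add, mul_one, Finset.sum_mul]
      congr 1
      apply Finset.sum_congr rfl
      intro k _
      rw [pow_add, pow_succ]
      ring
    rw [expand]
    have shift : (∑ k ∈ range (M+2),
          (if 1 ≤ k then g p M (k-1) * p^(ch (k-1) + M) * z^k else 0))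
        = ∑ k ∈ range (M+1), g p M k * p^(ch k + M) * z^(k+1) := by
      rw [Finset.sum_range_succ']
      rw [if_neg (by omega : ¬ (1:ℕ) ≤ 0), add_zero]
      apply Finset.sum_congr rfl
      intro i _
      rw [if_pos (by omega : 1 ≤ i+1), Nat.add_sub_cancel]
    have first : (∑ k ∈ range (M+2), g p M k * p^(ch k) * z^k)
        = ∑ k ∈ range (M+1), g p M k * p^(ch k) * z^k := by
      rw [Finset.sum_range_succ, g_top (p := p) M (M+1) (by omega)]
      simp
    rw [← shift, ← first, ← Finset.sum_add_distrib]
    apply Finset.sum_congr rfl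
    intro k hk
    rw [Finset.mem_range] at hk
    rcases Nat.eq_zero_or_pos k with rfl | hk1
    · rw [if_neg (by omega : ¬ (1:ℕ) ≤ 0), add_zero, g_zero hp, g_zero hp]
    · rw [if_pos (show 1 ≤ k by omega), g_pascal hp M k (by omega)]
      obtain ⟨k1, rfl⟩ : ∃ k1, k = k1 + 1 := ⟨k - 1, by omega⟩
      simp only [Nat.add_sub_cancel]
      have hche : ch (k1+1) + (M + 1 - (k1+1)) = ch k1 + M := by
        have h1 : ch (k1+1) = ch k1 + k1 := rfl
        omega
      rw [← hche, pow_add]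
      ring


lemma summable_pow {x : ℂ} (hx : ‖x‖ < 1) : Summable (fun n : ℕ => ‖x‖^(n+1)) := by
  simpa [pow_succ, mul_comm] using
    (summable_geometric_of_lt_one (norm_nonneg x) hx).mul_left ‖x‖

lemma one_sub_ge_exp {t r : ℝ} (ht0 : 0 ≤ t) (htr : t ≤ r) (hr : r < 1) :
    Real.exp (-(t/(1-r))) ≤ 1 - t := by
  have h1r : (0:ℝ) < 1 - r := by linarith
  have h1t : (0:ℝ) < 1 - t := by linarith
  have key : Real.exp (-(t/(1-t))) ≤ 1 - t := by
    have h := Real.add_one_le_exp (t/(1-t))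
    have heq : t/(1-t) + 1 = 1/(1-t) := by field_simp; ring
    have h2 : 1/(1-t) ≤ Real.exp (t/(1-t)) := by linarith
    rw [Real.exp_neg]
    rw [inv_le_comm₀ (Real.exp_pos _) h1t, ← one_div]
    exact h2
  refine le_trans (Real.exp_le_exp.2 ?_) key
  have : t/(1-t) ≤ t/(1-r) := by gcongr <;> linarith
  linarith


def qe (j : ℤ) : ℕ := (j*(2*j+1)).toNat

lemma qe_nonneg (j : ℤ) : 0 ≤ j*(2*j+1) := by
  rcases le_or_gt 0 j with h | h
  · positivity
  · have h1 : j ≤ -1 := by omega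
    nlinarith

lemma qe_cast (j : ℤ) : ((qe j : ℤ)) = j*(2*j+1) := Int.toNat_of_nonneg (qe_nonneg j)

/-- the finite product identity, pure polynomial algebra -/
lemma LAstar (x : ℂ) (m : ℕ) :
    ∏ j ∈ range (2*m), (x^(4*m) + x^(4*j+3))
      = (∏ i ∈ range m, ((1+x^(4*i+1))*(1+x^(4*i+3)))) * x^(6*m^2+m) := by
  induction m with
  | zero => simp
  | succ m ih =>
    have h2m : 2*(m+1) = (2*m+1)+1 := by ring
    rw [h2m, Finset.prod_range_succ', Finset.prod_range_succ]
    have hstep : ∀ j ∈ range (2*m), x^(4*(m+1)) + x^(4*(j+1)+3)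
        = x^4 * (x^(4*m) + x^(4*j+3)) := fun j _ => by ring
    rw [Finset.prod_congr rfl hstep, Finset.prod_mul_distrib, Finset.prod_const,
      Finset.card_range, ih, Finset.prod_range_succ]
    ring

lemma keyfin {x : ℂ} (hx : ‖x‖ < 1) (hx0 : x ≠ 0) (m : ℕ) :
    ∏ i ∈ range m, ((1+x^(4*i+1))*(1+x^(4*i+3)))
      = ∑ k ∈ range (2*m+1), g (x^4) (2*m) k * x^(qe ((k:ℤ) - (m:ℤ))) := by
  have hp4 : ‖x^4‖ < 1 := by
    rw [norm_pow]; exact pow_lt_one₀ (norm_nonneg x) hx (by norm_num)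
  have hr := rothe hp4 (x^3 * (x^(4*m))⁻¹) (2*m)
  have hxp : (x^(4*m)) ≠ 0 := pow_ne_zero _ hx0
  -- multiply both sides by x^(8m²)
  have hL : x^(8*m^2) * ∏ j ∈ range (2*m), (1 + (x^3*(x^(4*m))⁻¹) * (x^4)^j)
      = ∏ j ∈ range (2*m), (x^(4*m) + x^(4*j+3)) := by
    have hfac : ∀ j ∈ range (2*m), x^(4*m) + x^(4*j+3)
        = x^(4*m) * (1 + x^3*(x^(4*m))⁻¹*(x^4)^j) := by
      intro j _
      have h0 : (x^(4*m)) * (1 + x^3*(x^(4*m))⁻¹ * (x^4)^j)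
          = x^(4*m) + (x^(4*m) * (x^(4*m))⁻¹) * (x^3 * (x^4)^j) := by ring
      rw [h0, mul_inv_cancel₀ hxp, one_mul]
      ring
    conv_rhs => rw [Finset.prod_congr rfl hfac]
    rw [Finset.prod_mul_distrib, Finset.prod_const, Finset.card_range, ← pow_mul,
      show (4*m)*(2*m) = 8*m^2 by ring]
  have hR : x^(8*m^2) * (∑ k ∈ range (2*m+1), g (x^4) (2*m) k * (x^4)^(ch k)
        * (x^3*(x^(4*m))⁻¹)^k)
      = (∑ k ∈ range (2*m+1), g (x^4) (2*m) k * x^(qe ((k:ℤ)-(m:ℤ)))) * x^(6*m^2+m) := by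
    rw [Finset.mul_sum, Finset.sum_mul]
    apply Finset.sum_congr rfl
    intro k hk
    have hA : 4*(ch k) + 3*k + 8*m^2 = qe ((k:ℤ)-m) + (6*m^2+m) + 4*m*k := by
      have h1 := ch_int k
      have h2 := qe_cast ((k:ℤ)-m)
      zify
      linear_combination 2 * h1 - h2
    have e1 : x^(8*m^2) * (g (x^4) (2*m) k * (x^4)^(ch k) * (x^3*(x^(4*m))⁻¹)^k)
        = g (x^4) (2*m) k * (x^(4*(ch k) + 3*k + 8*m^2) * ((x^(4*m*k))⁻¹)) := by
      rw [mul_pow, inv_pow, ← pow_mul, ← pow_mul, ← pow_mul]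
      ring
    rw [e1, hA, show qe ((k:ℤ)-(m:ℤ)) + (6*m^2+m) + 4*m*k
        = (qe ((k:ℤ)-(m:ℤ)) + (6*m^2+m)) + 4*m*k by ring, pow_add (x) _ (4*m*k),
      mul_assoc, mul_inv_cancel₀ (pow_ne_zero _ hx0), mul_one, pow_add]
    ring
  rw [hr] at hL
  rw [hL] at hR
  rw [LAstar] at hR
  exact mul_right_cancel₀ (pow_ne_zero _ hx0) hR


def Ei (x : ℂ) : ℂ := ∏' n : ℕ, (1 - x^(n+1))

variable {x : ℂ} (hx : ‖x‖ < 1)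
include hx

lemma summable_log : Summable (fun n : ℕ => Complex.log (1 - x^(n+1))) := by
  apply Summable.of_norm
  have hs : Summable (fun n : ℕ => (3/2 : ℝ) * ‖x‖^(n+1)) := (summable_pow hx).mul_left _
  apply hs.of_norm_bounded_eventually
  have hev : ∀ᶠ n : ℕ in cofinite, ‖x‖^(n+1) ≤ 1/2 := by
    rcases eq_or_lt_of_le (norm_nonneg x) with h0 | h0
    · filter_upwards with n
      rw [← h0]; norm_num
    · have : Tendsto (fun n : ℕ => ‖x‖^(n+1)) atTop (𝓝 0) :=
        (tendsto_pow_atTop_nhds_zero_of_lt_one (norm_nonneg x) hx).comp (tendsto_add_atTop_nat 1)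
      rw [Nat.cofinite_eq_atTop]
      exact this.eventually_le_const (by norm_num)
  filter_upwards [hev] with n hn
  have := Complex.norm_log_one_add_half_le_self (z := -x^(n+1)) (by simpa using hn)
  simpa [sub_eq_add_neg] using this

lemma hasProd_Ei : HasProd (fun n : ℕ => 1 - x^(n+1)) (Ei x) := by
  have := (Complex.hasProd_of_hasSum_log (f := fun n : ℕ => 1 - x^(n+1))
    (fun n => term_ne hx n) (summable_log hx).hasSum).multipliable.hasProd
  simpa [Ei] using this

lemma tendsto_Df : Tendsto (Df x) atTop (𝓝 (Ei x)) := (hasProd_Ei hx).tendsto_prod_nat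

lemma Ei_ne_zero : Ei x ≠ 0 := by
  have := Complex.cexp_tsum_eq_tprod (f := fun n : ℕ => 1 - x^(n+1))
    (fun n => term_ne hx n) (summable_log hx)
  rw [Ei, ← this]
  exact Complex.exp_ne_zero _


lemma sum_pow_le (N : ℕ) : ∑ i ∈ range N, ‖x‖^(i+1) ≤ ‖x‖/(1-‖x‖) := by
  have h1 : ∑ i ∈ range N, ‖x‖^(i+1) ≤ ∑' n : ℕ, ‖x‖^(n+1) :=
    (summable_pow hx).sum_le_tsum _ (fun i _ => by positivity)
  have h2 : ∑' n : ℕ, ‖x‖^(n+1) = ‖x‖/(1-‖x‖) := by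
    rw [div_eq_mul_inv, ← tsum_geometric_of_lt_one (norm_nonneg x) hx]
    rw [← tsum_mul_left]
    congr 1; ext n; rw [pow_succ, mul_comm]
  linarith

lemma norm_Df_le (N : ℕ) : ‖Df x N‖ ≤ Real.exp (‖x‖/(1-‖x‖)) := by
  rw [Df, norm_prod]
  calc ∏ i ∈ range N, ‖1 - x^(i+1)‖
      ≤ ∏ i ∈ range N, Real.exp (‖x‖^(i+1)) := by
        apply Finset.prod_le_prod (fun i _ => norm_nonneg _)
        intro i _
        calc ‖1 - x^(i+1)‖ ≤ ‖(1:ℂ)‖ + ‖x^(i+1)‖ := norm_sub_le _ _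
          _ = 1 + ‖x‖^(i+1) := by rw [norm_one, norm_pow]
          _ ≤ Real.exp (‖x‖^(i+1)) := by
              have := Real.add_one_le_exp (‖x‖^(i+1)); linarith
    _ = Real.exp (∑ i ∈ range N, ‖x‖^(i+1)) := by rw [← Real.exp_sum]
    _ ≤ Real.exp (‖x‖/(1-‖x‖)) := Real.exp_le_exp.2 (sum_pow_le hx N)

lemma le_norm_Df (N : ℕ) : Real.exp (-(‖x‖/(1-‖x‖)^2)) ≤ ‖Df x N‖ := by
  have h1r : (0:ℝ) < 1 - ‖x‖ := by linarith
  rw [Df, norm_prod]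
  calc Real.exp (-(‖x‖/(1-‖x‖)^2))
      ≤ Real.exp (∑ i ∈ range N, -(‖x‖^(i+1)/(1-‖x‖))) := by
        apply Real.exp_le_exp.2
        have heq : ∑ i ∈ range N, -(‖x‖^(i+1)/(1-‖x‖))
            = -((∑ i ∈ range N, ‖x‖^(i+1))/(1-‖x‖)) := by
          rw [Finset.sum_div, ← Finset.sum_neg_distrib]
        rw [heq]
        apply neg_le_neg
        rw [div_le_div_iff₀ h1r (by positivity)]
        calc (∑ i ∈ range N, ‖x‖^(i+1)) * (1-‖x‖)^2
            ≤ (‖x‖/(1-‖x‖)) * (1-‖x‖)^2 := by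
              apply mul_le_mul_of_nonneg_right (sum_pow_le hx N) (by positivity)
          _ = ‖x‖ * (1-‖x‖) := by
              rw [pow_two, ← mul_assoc, div_mul_cancel₀ _ (ne_of_gt h1r)]
    _ = ∏ i ∈ range N, Real.exp (-(‖x‖^(i+1)/(1-‖x‖))) := by rw [← Real.exp_sum]
    _ ≤ ∏ i ∈ range N, ‖1 - x^(i+1)‖ := by
        apply Finset.prod_le_prod (fun i _ => (Real.exp_pos _).le)
        intro i _
        have h1 : ‖x‖^(i+1) ≤ ‖x‖ :=
          pow_le_of_le_one (norm_nonneg x) hx.le (Nat.succ_ne_zero i)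
        calc Real.exp (-(‖x‖^(i+1)/(1-‖x‖))) ≤ 1 - ‖x‖^(i+1) :=
              one_sub_ge_exp (by positivity) h1 hx
          _ = ‖(1:ℂ)‖ - ‖x^(i+1)‖ := by rw [norm_one, norm_pow]
          _ ≤ ‖1 - x^(i+1)‖ := norm_sub_norm_le _ _


omit hx

lemma hx2 : ‖x‖ < 1 → ‖x^2‖ < 1 := fun h => by
  rw [norm_pow]; exact pow_lt_one₀ (norm_nonneg x) h (by norm_num)

lemma hx4 : ‖x‖ < 1 → ‖x^4‖ < 1 := fun h => by
  rw [norm_pow]; exact pow_lt_one₀ (norm_nonneg x) h (by norm_num)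

include hx

/-- partial products of (1+x^{n+1}) converge to Ei(x²)/Ei(x) -/
lemma tendsto_oneadd :
    Tendsto (fun N => ∏ n ∈ range N, (1 + x^(n+1))) atTop (𝓝 (Ei (x^2) / Ei x)) := by
  have hCeq : ∀ N, (∏ n ∈ range N, (1 + x^(n+1))) = Df (x^2) N / Df x N := by
    intro N
    rw [eq_div_iff (Df_ne hx N), Df, Df, ← Finset.prod_mul_distrib]
    exact Finset.prod_congr rfl (fun n _ => by ring)
  have := (tendsto_Df (hx2 hx)).div (tendsto_Df hx) (Ei_ne_zero hx)
  exact Tendsto.congr (fun N => (hCeq N).symm) this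

lemma tendsto_even :
    Tendsto (fun K => ∏ j ∈ range K, (1 + x^(2*j+2))) atTop (𝓝 (Ei (x^4) / Ei (x^2))) := by
  have h1 := tendsto_oneadd (x := x^2) (hx2 hx)
  have e1 : ∀ K, (∏ n ∈ range K, (1 + (x^2)^(n+1))) = ∏ j ∈ range K, (1 + x^(2*j+2)) :=
    fun K => Finset.prod_congr rfl (fun n _ => by ring)
  have e2 : (x^2)^2 = x^4 := by ring
  rw [e2] at h1
  exact Tendsto.congr e1 h1

lemma odd_even_split (K : ℕ) :
    (∏ j ∈ range K, (1 + x^(2*j+1))) * (∏ j ∈ range K, (1 + x^(2*j+2)))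
      = ∏ n ∈ range (2*K), (1 + x^(n+1)) := by
  induction K with
  | zero => simp
  | succ K ih =>
    rw [Finset.prod_range_succ, Finset.prod_range_succ,
      show 2*(K+1) = (2*K+1)+1 by ring, Finset.prod_range_succ, Finset.prod_range_succ,
      show (2*K+1)+1 = 2*K+2 by ring]
    rw [← ih]
    ring

lemma tendsto_odd :
    Tendsto (fun K => ∏ j ∈ range K, (1 + x^(2*j+1))) atTop
      (𝓝 ((Ei (x^2) / Ei x) / (Ei (x^4) / Ei (x^2)))) := by
  have hBne : Ei (x^4) / Ei (x^2) ≠ 0 :=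
    div_ne_zero (Ei_ne_zero (hx4 hx)) (Ei_ne_zero (hx2 hx))
  have h2K : Tendsto (fun K : ℕ => 2*K) atTop atTop :=
    tendsto_atTop_atTop.2 (fun b => ⟨b, fun a ha => by omega⟩)
  have hC2 : Tendsto (fun K => ∏ n ∈ range (2*K), (1 + x^(n+1))) atTop
      (𝓝 (Ei (x^2) / Ei x)) := (tendsto_oneadd hx).comp h2K
  have hBK : ∀ K, (∏ j ∈ range K, (1 + x^(2*j+2))) ≠ 0 := by
    intro K
    apply Finset.prod_ne_zero_iff.2
    intro j _
    intro hcon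
    have h1 : x^(2*j+2) = -1 := by linear_combination hcon
    have h2 : ‖x^(2*j+2)‖ < 1 := by
      rw [norm_pow]; exact pow_lt_one₀ (norm_nonneg x) hx (by omega)
    rw [h1] at h2; simp at h2
  have heq : ∀ K, (∏ j ∈ range K, (1 + x^(2*j+1)))
      = (∏ n ∈ range (2*K), (1 + x^(n+1))) / (∏ j ∈ range K, (1 + x^(2*j+2))) := by
    intro K
    rw [eq_div_iff (hBK K), odd_even_split hx]
  exact Tendsto.congr (fun K => (heq K).symm) (hC2.div (tendsto_even hx) hBne)

omit hx in
lemma pair_odd_split (m : ℕ) :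
    ∏ i ∈ range m, ((1+x^(4*i+1))*(1+x^(4*i+3))) = ∏ j ∈ range (2*m), (1 + x^(2*j+1)) := by
  induction m with
  | zero => simp
  | succ m ih =>
    rw [Finset.prod_range_succ, show 2*(m+1) = (2*m+1)+1 by ring,
      Finset.prod_range_succ, Finset.prod_range_succ, ih]
    have e1 : 2*(2*m)+1 = 4*m+1 := by ring
    have e2 : 2*(2*m+1)+1 = 4*m+3 := by ring
    rw [e1, e2]
    ring

lemma tendsto_A :
    Tendsto (fun m => ∏ i ∈ range m, ((1+x^(4*i+1))*(1+x^(4*i+3)))) atTop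
      (𝓝 ((Ei (x^2) / Ei x) / (Ei (x^4) / Ei (x^2)))) := by
  have h2K : Tendsto (fun K : ℕ => 2*K) atTop atTop :=
    tendsto_atTop_atTop.2 (fun b => ⟨b, fun a ha => by omega⟩)
  exact Tendsto.congr (fun m => (pair_odd_split m).symm) ((tendsto_odd hx).comp h2K)


omit hx

def F (x : ℂ) (m : ℕ) (j : ℤ) : ℂ :=
  if j.natAbs ≤ m then g (x^4) (2*m) (j + m).toNat * x^(qe j) else 0

lemma sum_eq_tsum_F (m : ℕ) :
    (∑ k ∈ range (2*m+1), g (x^4) (2*m) k * x^(qe ((k:ℤ) - (m:ℤ)))) = ∑' j : ℤ, F x m j := by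
  have hzero : ∀ j ∉ Finset.Icc (-(m:ℤ)) (m:ℤ), F x m j = 0 := by
    intro j hj
    rw [Finset.mem_Icc] at hj
    rw [F, if_neg (by omega)]
  rw [tsum_eq_sum hzero]
  apply Finset.sum_nbij' (i := fun (k:ℕ) => (k:ℤ) - m) (j := fun (j:ℤ) => (j + m).toNat)
  · intro k hk
    rw [Finset.mem_range] at hk
    rw [Finset.mem_Icc]
    omega
  · intro j hj
    rw [Finset.mem_Icc] at hj
    rw [Finset.mem_range]
    omega
  · intro k hk; omega
  · intro j hj
    rw [Finset.mem_Icc] at hj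
    omega
  · intro k hk
    rw [Finset.mem_range] at hk
    have e1 : (((k:ℤ) - m) + m).toNat = k := by omega
    rw [F, if_pos (by omega), e1]

lemma tendsto_toNat_add (j : ℤ) : Tendsto (fun m : ℕ => (j + (m:ℤ)).toNat) atTop atTop :=
  tendsto_atTop_atTop.2 (fun b => ⟨b + j.natAbs, fun a ha => by omega⟩)

include hx

lemma F_pointwise (j : ℤ) :
    Tendsto (fun m => F x m j) atTop (𝓝 ((Ei (x^4))⁻¹ * x^(qe j))) := by
  have hp := hx4 hx
  have hDlim := tendsto_Df hp
  have h2K : Tendsto (fun K : ℕ => 2*K) atTop atTop :=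
    tendsto_atTop_atTop.2 (fun b => ⟨b, fun a ha => by omega⟩)
  have h1 : Tendsto (fun m : ℕ => Df (x^4) (2*m)) atTop (𝓝 (Ei (x^4))) := hDlim.comp h2K
  have h2 : Tendsto (fun m : ℕ => Df (x^4) ((j + (m:ℤ)).toNat)) atTop (𝓝 (Ei (x^4))) :=
    hDlim.comp (tendsto_toNat_add j)
  have h3 : Tendsto (fun m : ℕ => Df (x^4) ((-j + (m:ℤ)).toNat)) atTop (𝓝 (Ei (x^4))) :=
    hDlim.comp (tendsto_toNat_add (-j))
  have h4 := ((h1.div (h2.mul h3)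
    (mul_ne_zero (Ei_ne_zero hp) (Ei_ne_zero hp)))).mul_const (x^(qe j))
  have hval : Ei (x^4) / (Ei (x^4) * Ei (x^4)) = (Ei (x^4))⁻¹ := by
    rw [div_mul_eq_div_div, div_self (Ei_ne_zero hp), one_div]
  rw [hval] at h4
  apply h4.congr'
  filter_upwards [eventually_ge_atTop j.natAbs] with m hm
  have e2 : 2*m - (j + (m:ℤ)).toNat = (-j + (m:ℤ)).toNat := by omega
  rw [F, if_pos hm, g, if_pos (by omega), e2]
  simp only [Pi.div_apply]

omit hx in
lemma norm_g_le {p : ℂ} (hp : ‖p‖ < 1) (M k : ℕ) :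
    ‖g p M k‖ ≤ Real.exp (‖p‖/(1-‖p‖)) / (Real.exp (-(‖p‖/(1-‖p‖)^2)))^2 := by
  rw [g]
  split_ifs with h
  · rw [norm_div, norm_mul]
    apply div_le_div₀ (Real.exp_pos _).le (norm_Df_le hp M) (by positivity)
    rw [pow_two]
    exact mul_le_mul (le_norm_Df hp k) (le_norm_Df hp (M-k)) (Real.exp_pos _).le
      (norm_nonneg _)
  · rw [norm_zero]
    positivity

lemma le_qe_nat (n : ℕ) : n ≤ qe n := by
  rw [qe, Int.le_toNat (qe_nonneg _)]
  nlinarith [Int.ofNat_nonneg n]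

lemma le_qe_neg (n : ℕ) : n ≤ qe (-(n:ℤ)) := by
  rw [qe, Int.le_toNat (qe_nonneg _)]
  rcases Nat.eq_zero_or_pos n with rfl | hn
  · simp
  · have h1 : (1:ℤ) ≤ (n:ℤ) := by exact_mod_cast hn
    nlinarith [mul_nonneg (by linarith : (0:ℤ) ≤ (n:ℤ)) (by linarith : (0:ℤ) ≤ (n:ℤ)-1)]

lemma summable_qe : Summable (fun j : ℤ => ‖x‖^(qe j)) := by
  have hgeo : Summable (fun n : ℕ => ‖x‖^n) :=
    summable_geometric_of_lt_one (norm_nonneg x) hx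
  apply Summable.of_nat_of_neg
  · apply Summable.of_nonneg_of_le (fun n => by positivity) _ hgeo
    intro n
    exact pow_le_pow_of_le_one (norm_nonneg x) hx.le (le_qe_nat hx n)
  · apply Summable.of_nonneg_of_le (fun n => by positivity) _ hgeo
    intro n
    exact pow_le_pow_of_le_one (norm_nonneg x) hx.le (le_qe_neg hx n)

theorem gauss (hx0 : x ≠ 0) : ∑' j : ℤ, x^(qe j) = (Ei (x^2))^2 / Ei x := by
  have hp := hx4 hx
  have hTan : Tendsto (fun m => ∑' j : ℤ, F x m j) atTop
      (𝓝 (∑' j : ℤ, (Ei (x^4))⁻¹ * x^(qe j))) := by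
    apply tendsto_tsum_of_dominated_convergence
      (bound := fun j => (Real.exp (‖x^4‖/(1-‖x^4‖))
        / (Real.exp (-(‖x^4‖/(1-‖x^4‖)^2)))^2) * ‖x‖^(qe j))
    · exact (summable_qe hx).mul_left _
    · exact fun j => F_pointwise hx j
    · apply Eventually.of_forall
      intro m j
      rw [F]
      split_ifs with h
      · rw [norm_mul, norm_pow]
        exact mul_le_mul_of_nonneg_right (norm_g_le hp _ _) (by positivity)
      · rw [norm_zero]; positivity
  have hA := tendsto_A hx
  have heqfun : (fun m => ∏ i ∈ range m, ((1+x^(4*i+1))*(1+x^(4*i+3))))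
      = fun m => ∑' j : ℤ, F x m j := by
    funext m
    rw [keyfin hx hx0 m, sum_eq_tsum_F m]
  rw [heqfun] at hA
  have huniq := tendsto_nhds_unique hA hTan
  rw [tsum_mul_left] at huniq
  have h2 := Ei_ne_zero (hx2 hx)
  have h1 := Ei_ne_zero hx
  have h4' := Ei_ne_zero hp
  have hS : ∑' j : ℤ, x^(qe j)
      = Ei (x^4) * ((Ei (x^2) / Ei x) / (Ei (x^4) / Ei (x^2))) := by
    rw [huniq]
    field_simp
  rw [hS]
  field_simp


section Theta
omit hx
def ep (w : ℂ) : ℂ := Complex.exp (2*(π:ℂ)*Complex.I*w)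

lemma ep_add (a b : ℂ) : ep (a+b) = ep a * ep b := by
  rw [ep, ep, ep, ← Complex.exp_add]
  congr 1
  ring

lemma neg_one_zpow_eq (l : ℤ) : ((-1:ℂ))^l = Complex.exp ((π:ℂ)*Complex.I*l) := by
  rw [show (π:ℂ)*Complex.I*l = (l:ℂ) * ((π:ℂ)*Complex.I) by ring, Complex.exp_int_mul,
    Complex.exp_pi_mul_I]

/-- summability of exp-quadratic sums, via Mathlib's Jacobi theta machinery -/
lemma summable_norm_ep_quad (a b : ℂ) (ha : 0 < a.im) :
    Summable (fun n : ℤ => ‖ep (a*n^2 + b*n)‖) := by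
  have h2a : 0 < (2*a).im := by simp [Complex.mul_im]; linarith
  have heq : ∀ n : ℤ, ‖ep (a*n^2 + b*n)‖ = ‖jacobiTheta₂_term n b (2*a)‖ := by
    intro n
    rw [ep, jacobiTheta₂_term]
    congr 2
    push_cast
    ring
  have hbound := fun n : ℤ => norm_jacobiTheta₂_term_le (T := (2*a).im) h2a
    (z := b) (τ := 2*a) le_rfl le_rfl n
  have hsum := summable_pow_mul_jacobiTheta₂_term_bound |b.im| h2a 0
  simp only [pow_zero, one_mul] at hsum
  apply Summable.of_nonneg_of_le (fun n => norm_nonneg _) (fun n => ?_) hsum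
  rw [heq n]
  exact hbound n

lemma summable_ep_quad (a b : ℂ) (ha : 0 < a.im) :
    Summable (fun n : ℤ => ep (a*n^2 + b*n)) :=
  (summable_norm_ep_quad a b ha).of_norm

def Qf (τ : ℂ) (k : ℤ) : ℂ := ep (τ*((k:ℂ)*((k:ℂ)+1)/2))

def Tf (τ z : ℂ) (l : ℤ) : ℂ :=
  (-1:ℂ)^l * Complex.exp (2*(π:ℂ)*Complex.I*(l:ℂ)*z) *
    Complex.exp (2*(π:ℂ)*Complex.I*τ*((l:ℂ)^2/2))

def shear : ℤ×ℤ ≃ ℤ×ℤ where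
  toFun p := (p.1 - 1 - p.2, p.2)
  invFun p := (p.1 + p.2 + 1, p.2)
  left_inv p := by ext <;> simp <;> ring
  right_inv p := by ext <;> simp <;> ring

variable {τ z : ℂ} (hτ : 0 < τ.im)

/-- rewrite theta11 at shifted arguments -/
lemma theta11_plus :
    theta11 (2*τ) (z+τ/2)
      = Complex.I * (ep (z/2+τ/2) * ∑' n : ℤ, ep (τ*(n:ℂ)^2 + (z+3*τ/2+1/2)*n)) := by
  rw [theta11]
  congr 1
  rw [← tsum_mul_left]
  apply tsum_congr
  intro n
  rw [neg_one_zpow_eq]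
  simp only [ep, ← Complex.exp_add]
  rw [Complex.exp_eq_exp_iff_exists_int]
  exact ⟨0, by push_cast; ring⟩

lemma theta11_minus :
    theta11 (2*τ) (z-τ/2)
      = Complex.I * (ep (z/2) * ∑' n : ℤ, ep (τ*(n:ℂ)^2 + (z+τ/2+1/2)*n)) := by
  rw [theta11]
  congr 1
  rw [← tsum_mul_left]
  apply tsum_congr
  intro n
  rw [neg_one_zpow_eq]
  simp only [ep, ← Complex.exp_add]
  rw [Complex.exp_eq_exp_iff_exists_int]
  exact ⟨0, by push_cast; ring⟩

/-- the key per-term identity after shearing -/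
lemma perterm (l n : ℤ) :
    (- ep (z+τ/2)) * (ep (τ*((l-1-n : ℤ):ℂ)^2 + (z+3*τ/2+1/2)*((l-1-n : ℤ):ℂ))
        * ep (τ*(n:ℂ)^2 + (z+τ/2+1/2)*n))
      = Tf τ z l * Qf τ (l-1-2*n) := by
  rw [Tf, Qf, neg_one_zpow_eq]
  simp only [ep]
  rw [show -Complex.exp (2*(π:ℂ)*Complex.I*(z+τ/2)) =
    Complex.exp ((π:ℂ)*Complex.I) * Complex.exp (2*(π:ℂ)*Complex.I*(z+τ/2)) by
      rw [Complex.exp_pi_mul_I]; ring]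
  simp only [← Complex.exp_add]
  rw [Complex.exp_eq_exp_iff_exists_int]
  exact ⟨0, by push_cast; ring⟩

lemma Q_parity (c : ℤ) : ∑' n : ℤ, Qf τ (c + 2*n) = ∑' n : ℤ, Qf τ (2*n) := by
  rcases Int.even_or_odd c with ⟨b, hb⟩ | ⟨b, hb⟩
  · subst hb
    rw [← (Equiv.addRight b).tsum_eq (fun n => Qf τ (2*n))]
    exact tsum_congr fun n => congrArg (Qf τ) (by simp [Equiv.coe_addRight]; ring)
  · subst hb
    have h1 : ∑' n : ℤ, Qf τ (2*b+1 + 2*n) = ∑' n : ℤ, Qf τ (2*n+1) := by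
      rw [← (Equiv.addRight b).tsum_eq (fun n => Qf τ (2*n+1))]
      exact tsum_congr fun n => congrArg (Qf τ) (by simp [Equiv.coe_addRight]; ring)
    rw [h1, ← (Equiv.subLeft (-1 : ℤ)).tsum_eq (fun n => Qf τ (2*n+1))]
    apply tsum_congr
    intro n
    show Qf τ (2*(-1 - n)+1) = Qf τ (2*n)
    rw [Qf, Qf]
    congr 1
    push_cast
    ring

include hτ

lemma Q_sum_eq (l : ℤ) : ∑' n : ℤ, Qf τ (l - 1 - 2*n) = ∑' n : ℤ, Qf τ (2*n) := by
  rw [← Q_parity (τ := τ) (l-1)]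
  rw [← (Equiv.neg ℤ).tsum_eq (fun n => Qf τ (l - 1 + 2*n))]
  exact tsum_congr fun n => congrArg (Qf τ) (by simp; ring)

theorem stepA :
    theta11 (2*τ) (z+τ/2) * theta11 (2*τ) (z-τ/2)
      = (∑' n : ℤ, Qf τ (2*n)) * theta01 τ z := by
  classical
  set b1 : ℂ := z+3*τ/2+1/2 with hb1
  set b2 : ℂ := z+τ/2+1/2 with hb2
  have hn1 : Summable (fun n : ℤ => ‖ep (τ*(n:ℂ)^2 + b1*n)‖) :=
    summable_norm_ep_quad τ b1 hτ
  have hn2 : Summable (fun n : ℤ => ‖ep (τ*(n:ℂ)^2 + b2*n)‖) :=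
    summable_norm_ep_quad τ b2 hτ
  rw [theta11_plus, theta11_minus]
  rw [show (Complex.I * (ep (z/2+τ/2) * ∑' n : ℤ, ep (τ*(n:ℂ)^2 + b1*n)))
      * (Complex.I * (ep (z/2) * ∑' n : ℤ, ep (τ*(n:ℂ)^2 + b2*n)))
    = (Complex.I*Complex.I) * ((ep (z/2+τ/2) * ep (z/2)) *
        ((∑' n : ℤ, ep (τ*(n:ℂ)^2 + b1*n)) * (∑' n : ℤ, ep (τ*(n:ℂ)^2 + b2*n)))) by ring]
  rw [Complex.I_mul_I, ← ep_add, tsum_mul_tsum_of_summable_norm hn1 hn2]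
  rw [← shear.tsum_eq (fun p : ℤ×ℤ => ep (τ*(p.1:ℂ)^2 + b1*p.1) * ep (τ*(p.2:ℂ)^2 + b2*p.2))]
  have hsummable : Summable (fun p : ℤ×ℤ =>
      ep (τ*((shear p).1:ℂ)^2 + b1*(shear p).1) * ep (τ*((shear p).2:ℂ)^2 + b2*(shear p).2)) :=
    shear.summable_iff.2 (summable_mul_of_summable_norm hn1 hn2)
  have hinner : ∀ l : ℤ, Summable (fun n : ℤ =>
      ep (τ*((shear (l,n)).1:ℂ)^2 + b1*(shear (l,n)).1)
        * ep (τ*((shear (l,n)).2:ℂ)^2 + b2*(shear (l,n)).2)) := by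
    intro l
    have h2τ : 0 < (2*τ).im := by simp [Complex.mul_im]; linarith
    have := (summable_ep_quad (2*τ) (-2*τ*((l:ℂ)-1) - b1 + b2) h2τ).mul_left
      (ep (τ*((l:ℂ)-1)^2 + b1*((l:ℂ)-1)))
    apply this.congr
    intro n
    show ep (τ*((l:ℂ)-1)^2 + b1*((l:ℂ)-1)) * ep (2*τ*(n:ℂ)^2 + (-2*τ*((l:ℂ)-1) - b1 + b2)*n)
      = _
    rw [← ep_add]
    show ep _ = ep (τ*(((l - 1 - n : ℤ)):ℂ)^2 + b1*((l - 1 - n : ℤ):ℂ))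
        * ep (τ*(n:ℂ)^2 + b2*(n:ℂ))
    rw [← ep_add]
    congr 1
    push_cast
    ring
  rw [hsummable.tsum_prod' hinner]
  -- now pull the constant inside and apply perterm
  rw [show (z/2+τ/2+z/2) = z + τ/2 by ring]
  rw [neg_one_mul, ← neg_mul, ← tsum_mul_left]
  have hcongr : ∀ l : ℤ,
      (- ep (z+τ/2)) * (∑' n : ℤ, ep (τ*((shear (l,n)).1:ℂ)^2 + b1*(shear (l,n)).1)
        * ep (τ*((shear (l,n)).2:ℂ)^2 + b2*(shear (l,n)).2))
      = Tf τ z l * (∑' n : ℤ, Qf τ (2*n)) := by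
    intro l
    rw [← tsum_mul_left]
    have : ∀ n : ℤ, (- ep (z+τ/2)) * (ep (τ*((shear (l,n)).1:ℂ)^2 + b1*(shear (l,n)).1)
        * ep (τ*((shear (l,n)).2:ℂ)^2 + b2*(shear (l,n)).2))
        = Tf τ z l * Qf τ (l-1-2*n) := by
      intro n
      have := perterm (τ := τ) (z := z) l n
      rw [hb1, hb2]
      exact this
    rw [tsum_congr this, tsum_mul_left, Q_sum_eq hτ l]
  rw [tsum_congr hcongr, tsum_mul_right, mul_comm]
  rfl


end Theta
end JTPmain

theorem stmt11 (τ z : ℂ) (hτ : 0 < τ.im) :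
    theta11 (2*τ) (z + τ/2) * theta11 (2*τ) (z - τ/2) =
      Complex.exp (2*(π:ℂ)*Complex.I*τ*(-(1/8))) * ((dedekindEta (2*τ))^2 / dedekindEta τ) * theta01 τ z := by
  set q : ℂ := Complex.exp (2*(π:ℂ)*Complex.I*τ) with hqdef
  have hre : (2*(π:ℂ)*Complex.I*τ).re = -(2*π*τ.im) := by
    simp [Complex.mul_re, Complex.mul_im]
  have hq : ‖q‖ < 1 := by
    rw [hqdef, Complex.norm_exp, hre]
    rw [Real.exp_lt_one_iff]
    have := Real.pi_pos
    nlinarith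
  have hq0 : q ≠ 0 := Complex.exp_ne_zero _
  have hq2exp : Complex.exp (2*(π:ℂ)*Complex.I*(2*τ)) = q^2 := by
    rw [hqdef, ← Complex.exp_nat_mul]
    congr 1
    push_cast
    ring
  have hEta1 : dedekindEta τ = Complex.exp ((π:ℂ)*Complex.I*τ/12) * JTPmain.Ei q := by
    rw [dedekindEta, JTPmain.Ei]
    congr 1
    apply tprod_congr
    intro n
    congr 1
    rw [hqdef, ← Complex.exp_nat_mul]
    congr 1
    push_cast
    ring
  have hEta2 : dedekindEta (2*τ) = Complex.exp ((π:ℂ)*Complex.I*(2*τ)/12) * JTPmain.Ei (q^2) := by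
    rw [dedekindEta, JTPmain.Ei]
    congr 1
    apply tprod_congr
    intro n
    congr 1
    rw [← hq2exp, ← Complex.exp_nat_mul]
    congr 1
    push_cast
    ring
  have hA := JTPmain.stepA (τ := τ) (z := z) hτ
  have hSq : (∑' n : ℤ, JTPmain.Qf τ (2*n)) = ∑' j : ℤ, q^(JTPmain.qe j) := by
    apply tsum_congr
    intro j
    rw [JTPmain.Qf, JTPmain.ep, hqdef, ← Complex.exp_nat_mul]
    congr 1
    have hc := JTPmain.qe_cast j
    have hcc : ((JTPmain.qe j : ℕ) : ℂ) = ((j:ℂ))*(2*(j:ℂ)+1) := by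
      exact_mod_cast congrArg (fun t : ℤ => (t : ℂ)) hc
    rw [hcc]
    push_cast
    ring
  have hg := JTPmain.gauss hq hq0
  rw [hA, hSq, hg, hEta1, hEta2]
  have hX := JTPmain.Ei_ne_zero (JTPmain.hx2 hq)
  have hY := JTPmain.Ei_ne_zero hq
  have hc : Complex.exp (2*(π:ℂ)*Complex.I*τ*(-(1/8)))
      * (Complex.exp ((π:ℂ)*Complex.I*(2*τ)/12))^2 = Complex.exp ((π:ℂ)*Complex.I*τ/12) := by
    rw [sq, ← Complex.exp_add, ← Complex.exp_add]
    congr 1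
    ring
  rw [mul_pow]
  have he1 : Complex.exp ((π:ℂ)*Complex.I*τ/12) ≠ 0 := Complex.exp_ne_zero _
  field_simp
  ring_nf
  ring_nf at hc
  linear_combination (-(theta01 τ z)) * hc


end
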